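/- Assume the CFL condition 0 ≤ λL ≤ 1. Let w : ℤ → ℝ be bounded. Then for every constant c ∈ ℝ and every i ∈ ℤ, the scheme satisfies the discrete entropy inequality |G(w)_i − c| ≤ |w_i − c| + λ Σ_{j≥i} I_{j−i} ( Q_c(w_{j+1}) − Q_c(w_j) ), where Q_c(w) = |W(w) − W(c)|. -/

import Mathlib

open MeasureTheory

/-- One step of the filtered scheme:
`G(w)_i = w_i + λ Σ_{j ≥ i} I_{j-i} (W(w_{j+1}) - W(w_j))`. -/
noncomputable def schemeStep (I : ℕ → ℝ) (W : ℝ → ℝ) (lam : ℝ) (w : ℤ → ℝ) (i : ℤ) : ℝ :=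
  w i + lam * ∑' k : ℕ, I k * (W (w (i + (k : ℤ) + 1)) - W (w (i + (k : ℤ))))

/-- under the CFL condition `0 ≤ λL ≤ 1`, the filtered scheme
satisfies the discrete Kružkov entropy inequality
`|G(w)_i − c| ≤ |w_i − c| + λ Σ_{j≥i} I_{j−i} (Q_c(w_{j+1}) − Q_c(w_j))`
with `Q_c(w) = |W(w) − W(c)|`. -/
theorem stmt_7
    (Φ : ℝ → ℝ) (α Δz Δt lam L : ℝ)
    (hα : 0 < α) (hΔz : 0 < Δz) (hΔt : 0 < Δt) (hlam : lam = Δt / Δz)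
    (hΦnonneg : ∀ z : ℝ, 0 ≤ z → 0 ≤ Φ z)
    (hΦmono : ∀ x y : ℝ, 0 ≤ x → x ≤ y → Φ y ≤ Φ x)
    (hΦmass : ∫ ζ in Set.Ioi (0:ℝ), Φ ζ = 1)
    (hΦmom : IntegrableOn (fun ζ => ζ * Φ ζ) (Set.Ioi (0:ℝ)))
    (W : ℝ → ℝ) (hW : Differentiable ℝ W)
    (hW' : ∀ x : ℝ, 0 ≤ deriv W x ∧ deriv W x ≤ L)
    (hCFL : 0 ≤ lam * L ∧ lam * L ≤ 1)
    (I : ℕ → ℝ)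
    (hI : ∀ k : ℕ, I k = ∫ ζ in ((k : ℝ) * Δz)..(((k : ℝ) + 1) * Δz), (1/α) * Φ (ζ/α))
    (w : ℤ → ℝ) (hwB : ∃ M, ∀ i, |w i| ≤ M) :
    ∀ c : ℝ, ∀ i : ℤ,
      |schemeStep I W lam w i - c| ≤
        |w i - c| + lam * ∑' k : ℕ, I k *
          (|W (w (i + (k : ℤ) + 1)) - W c| - |W (w (i + (k : ℤ))) - W c|) := by
  obtain ⟨M, hM⟩ := hwB
  have hL : 0 ≤ L := le_trans (hW' 0).1 (hW' 0).2
  have hlam0 : 0 < lam := hlam ▸ div_pos hΔt hΔz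
  have hWmono : Monotone W := monotone_of_deriv_nonneg hW fun x => (hW' x).1
  have hLip : ∀ a b : ℝ, |W a - W b| ≤ L * |a - b| := by
    intro a b
    have := Convex.norm_image_sub_le_of_norm_deriv_le (𝕜 := ℝ) (f := W) (s := Set.univ)
      (fun x _ => hW x) (fun x _ => by
        rw [Real.norm_eq_abs, abs_of_nonneg (hW' x).1]; exact (hW' x).2)
      convex_univ (Set.mem_univ b) (Set.mem_univ a)
    simpa [Real.norm_eq_abs] using this
  -- properties of the kernel f
  set f : ℝ → ℝ := fun ζ => (1/α) * Φ (ζ/α) with hf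
  have hf0 : ∀ ζ : ℝ, 0 ≤ ζ → 0 ≤ f ζ := fun ζ hζ =>
    mul_nonneg (by positivity) (hΦnonneg _ (div_nonneg hζ hα.le))
  have hfant : ∀ s : Set ℝ, (∀ x ∈ s, (0:ℝ) ≤ x) → AntitoneOn f s := by
    intro s hs x hx y hy hxy
    exact mul_le_mul_of_nonneg_left
      (hΦmono _ _ (div_nonneg (hs x hx) hα.le) (by gcongr)) (by positivity)
  have hII : ∀ a b : ℝ, 0 ≤ a → IntervalIntegrable f MeasureTheory.volume a b ∨ True := fun _ _ _ => Or.inr trivial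
  have hIInt : ∀ k : ℕ, IntervalIntegrable f MeasureTheory.volume ((k:ℝ)*Δz) (((k:ℝ)+1)*Δz) := by
    intro k
    apply AntitoneOn.intervalIntegrable
    apply hfant
    intro x hx
    rw [Set.uIcc_of_le (by nlinarith)] at hx
    have : (0:ℝ) ≤ (k:ℝ)*Δz := by positivity
    linarith [hx.1]
  have hInn : ∀ k : ℕ, 0 ≤ I k := by
    intro k
    rw [hI k]
    apply intervalIntegral.integral_nonneg (by nlinarith)
    intro u hu
    have : (0:ℝ) ≤ (k:ℝ)*Δz := by positivity
    exact hf0 u (by linarith [hu.1])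
  have hImono : ∀ k : ℕ, I (k+1) ≤ I k := by
    intro k
    rw [hI k, hI (k+1)]
    have key : (∫ ζ in ((k:ℝ)*Δz)..(((k:ℝ)+1)*Δz), f (ζ + Δz))
        = ∫ ζ in (((k:ℕ)+1:ℕ):ℝ)*Δz..((((k:ℕ)+1:ℕ):ℝ)+1)*Δz, f ζ := by
      rw [intervalIntegral.integral_comp_add_right]
      congr 1 <;> push_cast <;> ring
    rw [← key]
    apply intervalIntegral.integral_mono_on (by nlinarith)
    · -- shifted integrability
      apply AntitoneOn.intervalIntegrable
      intro x hx y hy hxy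
      have h0 : (0:ℝ) ≤ (k:ℝ)*Δz := by positivity
      rw [Set.uIcc_of_le (by nlinarith)] at hx hy
      exact hfant (Set.Icc ((k:ℝ)*Δz + Δz) (((k:ℝ)+1)*Δz + Δz))
        (fun z hz => by linarith [hz.1]) ⟨by linarith [hx.1], by linarith [hx.2]⟩
        ⟨by linarith [hy.1], by linarith [hy.2]⟩ (by linarith)
    · exact hIInt k
    · intro x hx
      have h0 : (0:ℝ) ≤ (k:ℝ)*Δz := by positivity
      apply mul_le_mul_of_nonneg_left _ (by positivity : (0:ℝ) ≤ 1/α)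
      exact hΦmono _ _ (div_nonneg (by linarith [hx.1]) hα.le) (by gcongr; linarith)
  have hΦint : IntegrableOn Φ (Set.Ioi (0:ℝ)) := by
    by_contra h
    rw [MeasureTheory.integral_undef h] at hΦmass
    norm_num at hΦmass
  have hcomp : IntegrableOn (fun ζ : ℝ => Φ (α⁻¹ * ζ)) (Set.Ioi (0:ℝ)) := by
    rw [integrableOn_Ioi_comp_mul_left_iff Φ 0 (inv_pos.mpr hα), mul_zero]
    exact hΦint
  have hfint : IntegrableOn f (Set.Ioi (0:ℝ)) := by
    have := hcomp.const_mul (1/α)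
    simpa [hf, div_eq_inv_mul, IntegrableOn] using this
  have hfmass : ∫ ζ in Set.Ioi (0:ℝ), f ζ = 1 := by
    have h1 : ∫ ζ in Set.Ioi (0:ℝ), Φ (α⁻¹ * ζ) = (α⁻¹)⁻¹ • ∫ ζ in Set.Ioi ((α⁻¹)*(0:ℝ)), Φ ζ :=
      integral_comp_mul_left_Ioi Φ 0 (inv_pos.mpr hα)
    simp only [mul_zero, inv_inv, hΦmass, smul_eq_mul, mul_one] at h1
    calc ∫ ζ in Set.Ioi (0:ℝ), f ζ = ∫ ζ in Set.Ioi (0:ℝ), (1/α) * Φ (α⁻¹ * ζ) := by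
          simp [hf, div_eq_inv_mul]
      _ = (1/α) * ∫ ζ in Set.Ioi (0:ℝ), Φ (α⁻¹ * ζ) := by rw [MeasureTheory.integral_const_mul]
      _ = 1 := by rw [h1]; field_simp
  have hIpartial : ∀ N : ℕ, ∑ k ∈ Finset.range N, I k ≤ 1 := by
    intro N
    have hsum : ∑ k ∈ Finset.range N, I k = ∫ ζ in (0:ℝ)..((N:ℝ)*Δz), f ζ := by
      have := intervalIntegral.sum_integral_adjacent_intervals
        (a := fun k : ℕ => (k:ℝ)*Δz) (n := N) (f := f) (μ := MeasureTheory.volume)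
        (fun k _ => by
          have := hIInt k
          simpa [push_cast, Nat.cast_add, Nat.cast_one, add_mul, one_mul] using this)
      simp only [Nat.cast_zero, zero_mul] at this
      rw [← this]
      apply Finset.sum_congr rfl
      intro k _
      rw [hI k]
      congr 1
      push_cast; ring
    rw [hsum, ← hfmass]
    rw [intervalIntegral.integral_of_le (by positivity)]
    apply MeasureTheory.setIntegral_mono_set hfint
    · filter_upwards [MeasureTheory.ae_restrict_mem measurableSet_Ioi] with x hx
      exact hf0 x (le_of_lt hx)
    · exact (Set.Ioc_subset_Ioi_self).eventuallyLE
  have hIsum : Summable I := summable_of_sum_range_le hInn hIpartial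
  have hI0 : I 0 ≤ 1 := by simpa using hIpartial 1
  have habs : ∀ a b : ℝ, |a - b| ≤ |a| + |b| := fun a b => by
    calc |a - b| ≤ |a - 0| + |0 - b| := abs_sub_le a 0 b
      _ = |a| + |b| := by simp
  have hsummul : ∀ (x : ℕ → ℝ) (C : ℝ), (∀ k, |x k| ≤ C) → Summable (fun k => I k * x k) := by
    intro x C hx
    apply Summable.of_norm_bounded (g := fun k => I k * C) (hIsum.mul_right C)
    intro k
    rw [Real.norm_eq_abs, abs_mul, abs_of_nonneg (hInn k)]
    exact mul_le_mul_of_nonneg_left (hx k) (hInn k)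
  intro c i
  set M' : ℝ := max M |c| with hM'
  have hMM' : M ≤ M' := le_max_left _ _
  have hterm : ∀ (u : ℤ → ℝ), (∀ j, |u j| ≤ M') → ∀ j j' : ℤ,
      |W (u j) - W (u j')| ≤ L * (2*M') := by
    intro u hu j j'
    calc |W (u j) - W (u j')| ≤ L * |u j - u j'| := hLip _ _
      _ ≤ L * (2*M') := by
          apply mul_le_mul_of_nonneg_left _ hL
          calc |u j - u j'| ≤ |u j| + |u j'| := habs _ _
            _ ≤ 2*M' := by linarith [hu j, hu j']
  have hkey : ∀ u v : ℤ → ℝ, (∀ j, |u j| ≤ M') → (∀ j, |v j| ≤ M') →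
      schemeStep I W lam v i - schemeStep I W lam u i
        = (v i - u i) + lam * ∑' k : ℕ, I k *
            ((W (v (i+(k:ℤ)+1)) - W (u (i+(k:ℤ)+1))) - (W (v (i+(k:ℤ))) - W (u (i+(k:ℤ))))) := by
    intro u v hu hv
    have hsu : Summable (fun k : ℕ => I k * (W (u (i+(k:ℤ)+1)) - W (u (i+(k:ℤ))))) :=
      hsummul _ (L*(2*M')) (fun k => hterm u hu _ _)
    have hsv : Summable (fun k : ℕ => I k * (W (v (i+(k:ℤ)+1)) - W (v (i+(k:ℤ))))) :=
      hsummul _ (L*(2*M')) (fun k => hterm v hv _ _)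
    have hd : ∑' k : ℕ, I k *
        ((W (v (i+(k:ℤ)+1)) - W (u (i+(k:ℤ)+1))) - (W (v (i+(k:ℤ))) - W (u (i+(k:ℤ)))))
        = (∑' k : ℕ, I k * (W (v (i+(k:ℤ)+1)) - W (v (i+(k:ℤ)))))
          - ∑' k : ℕ, I k * (W (u (i+(k:ℤ)+1)) - W (u (i+(k:ℤ)))) := by
      rw [← Summable.tsum_sub hsv hsu]
      exact tsum_congr fun k => by ring
    unfold schemeStep
    rw [hd]; ring
  have hGm : ∀ u v : ℤ → ℝ, (∀ j, |u j| ≤ M') → (∀ j, |v j| ≤ M') → (∀ j, u j ≤ v j) →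
      schemeStep I W lam u i ≤ schemeStep I W lam v i := by
    intro u v hu hv huv
    set d : ℕ → ℝ := fun k => W (v (i+(k:ℤ))) - W (u (i+(k:ℤ))) with hd
    have hdsucc : ∀ k : ℕ, d (k+1) = W (v (i+(k:ℤ)+1)) - W (u (i+(k:ℤ)+1)) := by
      intro k
      simp only [hd, Nat.cast_add, Nat.cast_one, add_assoc]
    have hd0 : ∀ k, 0 ≤ d k := fun k => sub_nonneg.2 (hWmono (huv _))
    set C : ℝ := L * (2*M') with hC
    have hdC : ∀ k, |d k| ≤ C := by
      intro k
      calc |d k| ≤ L * |v (i+(k:ℤ)) - u (i+(k:ℤ))| := hLip _ _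
        _ ≤ C := by
            rw [hC]
            apply mul_le_mul_of_nonneg_left _ hL
            calc |v (i+(k:ℤ)) - u (i+(k:ℤ))| ≤ |v (i+(k:ℤ))| + |u (i+(k:ℤ))| := habs _ _
              _ ≤ 2*M' := by linarith [hu (i+(k:ℤ)), hv (i+(k:ℤ))]
    have hs1 : Summable (fun k : ℕ => I k * d (k+1)) := hsummul _ C (fun k => hdC _)
    have hs2 : Summable (fun k : ℕ => I k * d k) := hsummul _ C (fun k => hdC _)
    have hsplit_a : Summable (fun k : ℕ => (I k - I (k+1)) * d (k+1)) := by
      apply Summable.of_norm_bounded (g := fun k => I k * C) (hIsum.mul_right C)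
      intro k
      rw [Real.norm_eq_abs, abs_mul, abs_of_nonneg (sub_nonneg.2 (hImono k))]
      exact mul_le_mul (by linarith [hInn (k+1)]) (hdC _) (abs_nonneg _) (hInn k)
    have hsplit_b : Summable (fun k : ℕ => I (k+1) * d (k+1)) := by
      apply Summable.of_norm_bounded (g := fun k => I k * C) (hIsum.mul_right C)
      intro k
      rw [Real.norm_eq_abs, abs_mul, abs_of_nonneg (hInn (k+1))]
      exact mul_le_mul (hImono k) (hdC _) (abs_nonneg _) (hInn k)
    have hshift : ∑' k : ℕ, I k * d k = I 0 * d 0 + ∑' k : ℕ, I (k+1) * d (k+1) :=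
      Summable.tsum_eq_zero_add hs2
    have hsplit : ∑' k : ℕ, I k * d (k+1)
        = (∑' k : ℕ, (I k - I (k+1)) * d (k+1)) + ∑' k : ℕ, I (k+1) * d (k+1) := by
      rw [← Summable.tsum_add hsplit_a hsplit_b]
      exact tsum_congr fun k => by ring
    have hS : ∑' k : ℕ, I k * (d (k+1) - d k)
        = (∑' k : ℕ, (I k - I (k+1)) * d (k+1)) - I 0 * d 0 := by
      have h6 : ∑' k : ℕ, I k * (d (k+1) - d k)
          = (∑' k : ℕ, I k * d (k+1)) - ∑' k : ℕ, I k * d k := by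
        rw [← Summable.tsum_sub hs1 hs2]; exact tsum_congr fun k => by ring
      rw [h6, hsplit, hshift]; ring
    have hSge : -(I 0 * d 0) ≤ ∑' k : ℕ, I k * (d (k+1) - d k) := by
      rw [hS]
      have : 0 ≤ ∑' k : ℕ, (I k - I (k+1)) * d (k+1) :=
        tsum_nonneg fun k => mul_nonneg (sub_nonneg.2 (hImono k)) (hd0 _)
      linarith
    have hkeyuv := hkey u v hu hv
    have hform : ∑' k : ℕ, I k *
        ((W (v (i+(k:ℤ)+1)) - W (u (i+(k:ℤ)+1))) - (W (v (i+(k:ℤ))) - W (u (i+(k:ℤ)))))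
        = ∑' k : ℕ, I k * (d (k+1) - d k) :=
      tsum_congr fun k => by rw [hdsucc k]
    rw [hform] at hkeyuv
    have hd0le : d 0 ≤ L * (v i - u i) := by
      have h1 : d 0 = W (v i) - W (u i) := by simp [hd]
      have h2 : |W (v i) - W (u i)| ≤ L * |v i - u i| := hLip _ _
      rw [h1]
      calc W (v i) - W (u i) ≤ |W (v i) - W (u i)| := le_abs_self _
        _ ≤ L * |v i - u i| := h2
        _ = L * (v i - u i) := by rw [abs_of_nonneg (sub_nonneg.2 (huv i))]
    have hstep : lam * (I 0 * d 0) ≤ v i - u i := by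
      have h3 : lam * (I 0 * d 0) ≤ lam * (I 0 * (L * (v i - u i))) :=
        mul_le_mul_of_nonneg_left (mul_le_mul_of_nonneg_left hd0le (hInn 0)) hlam0.le
      have h4 : lam * (I 0 * (L * (v i - u i))) = (lam * L) * I 0 * (v i - u i) := by ring
      have h5 : (lam * L) * I 0 * (v i - u i) ≤ 1 * 1 * (v i - u i) := by
        apply mul_le_mul_of_nonneg_right _ (sub_nonneg.2 (huv i))
        calc (lam*L) * I 0 ≤ 1 * I 0 := mul_le_mul_of_nonneg_right hCFL.2 (hInn 0)
          _ ≤ 1 * 1 := by rw [one_mul, one_mul]; exact hI0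
      nlinarith
    have h7 := mul_le_mul_of_nonneg_left hSge hlam0.le
    have h8 : lam * (-(I 0 * d 0)) = -(lam * (I 0 * d 0)) := by ring
    linarith
  have hGc : schemeStep I W lam (fun _ => c) i = c := by
    simp [schemeStep]
  set u : ℤ → ℝ := fun j => min (w j) c with hu
  set v : ℤ → ℝ := fun j => max (w j) c with hv
  have hub : ∀ j, |u j| ≤ M' := by
    intro j
    rcases le_total (w j) c with h|h
    · simp only [hu, min_eq_left h]; exact (hM j).trans hMM'
    · simp only [hu, min_eq_right h]; exact le_max_right _ _
  have hvb : ∀ j, |v j| ≤ M' := by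
    intro j
    rcases le_total (w j) c with h|h
    · simp only [hv, max_eq_right h]; exact le_max_right _ _
    · simp only [hv, max_eq_left h]; exact (hM j).trans hMM'
  have hwb' : ∀ j, |w j| ≤ M' := fun j => (hM j).trans hMM'
  have hcb : ∀ j : ℤ, |(fun _ : ℤ => c) j| ≤ M' := fun j => le_max_right _ _
  have A1 := hGm u w hub hwb' (fun j => min_le_left _ _)
  have A2 := hGm w v hwb' hvb (fun j => le_max_left _ _)
  have A3 := hGm u (fun _ => c) hub hcb (fun j => min_le_right _ _)
  have A4 := hGm (fun _ => c) v hcb hvb (fun j => le_max_right _ _)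
  rw [hGc] at A3 A4
  have habs2 : |schemeStep I W lam w i - c|
      ≤ schemeStep I W lam v i - schemeStep I W lam u i := by
    rw [abs_le]; constructor <;> linarith
  have hfinal := hkey u v hub hvb
  have hQ : ∀ j : ℤ, W (v j) - W (u j) = |W (w j) - W c| := by
    intro j
    rcases le_total (w j) c with h|h
    · simp only [hv, hu, max_eq_right h, min_eq_left h,
        abs_of_nonpos (sub_nonpos.2 (hWmono h))]
      ring
    · simp only [hv, hu, max_eq_left h, min_eq_right h,
        abs_of_nonneg (sub_nonneg.2 (hWmono h))]
  have hviui : v i - u i = |w i - c| := by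
    simp only [hv, hu]
    rw [max_sub_min_eq_abs, abs_sub_comm]
  have hform2 : ∑' k : ℕ, I k *
      ((W (v (i+(k:ℤ)+1)) - W (u (i+(k:ℤ)+1))) - (W (v (i+(k:ℤ))) - W (u (i+(k:ℤ)))))
      = ∑' k : ℕ, I k * (|W (w (i+(k:ℤ)+1)) - W c| - |W (w (i+(k:ℤ))) - W c|) :=
    tsum_congr fun k => by rw [hQ, hQ]
  rw [hform2, hviui] at hfinal
  linarith
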